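/- Correctness of the greedy OBA algorithm: given a finite set M, a family Q ⊆ P(M) and a relation R ⊆ Q × Q, a linear ordering of M fulfilling the one-before-all property exists if and only if the following greedy process empties M: repeatedly pick any element x ∈ M such that x is not contained in any set B with a still-active constraint (A,B) ∈ R with A ∩ (picked elements) = ∅; append x; a constraint (A,B) becomes inactive once some element of A is picked. -/

import Mathlib

variable {M : Type*}

/-- `x` is eligible w.r.t. the set `P` of picked elements: `x` is unpicked and
for every constraint `(A,B) ∈ R` with `x ∈ B` that is still active
(`A ∩ P = ∅` would make it active), some element of `A` has been picked. -/
def ObaEligible [DecidableEq M] (R : Set (Set M × Set M)) (P : Finset M) (x : M) : Prop :=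
  x ∉ P ∧ ∀ p ∈ R, x ∈ p.2 → ∃ a ∈ p.1, a ∈ P

/-- A run of the greedy OBA algorithm: a duplicate-free list in which every element
is eligible w.r.t. the preceding prefix. -/
def ObaRun [DecidableEq M] (R : Set (Set M × Set M)) (l : List M) : Prop :=
  l.Nodup ∧ ∀ (i : ℕ) (h : i < l.length),
    ObaEligible R ((l.take i).toFinset) (l.get ⟨i, h⟩)

lemma obaRun_append [DecidableEq M] {R : Set (Set M × Set M)} {l : List M} {x : M}
    (hl : ObaRun R l) (hx : ObaEligible R l.toFinset x) : ObaRun R (l ++ [x]) := by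
  obtain ⟨hnd, hel⟩ := hl
  have hxl : x ∉ l := fun h => hx.1 (List.mem_toFinset.mpr h)
  constructor
  · simp [List.nodup_append, hnd, hxl]
    rintro a ha rfl
    exact hxl ha
  · intro i h
    rw [List.length_append, List.length_singleton] at h
    rcases Nat.lt_succ_iff_lt_or_eq.mp h with h' | h'
    · have ht : (l ++ [x]).take i = l.take i := List.take_append_of_le_length h'.le
      have hg : (l ++ [x]).get ⟨i, by simp; omega⟩ = l.get ⟨i, h'⟩ :=
        by simp [List.getElem_append_left h']
      rw [ht, hg]
      exact hel i h'
    · subst h'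
      have ht : (l ++ [x]).take l.length = l := by
        rw [List.take_append_of_le_length le_rfl, List.take_length]
      have hg : (l ++ [x]).get ⟨l.length, by simp⟩ = x := by
        simp [List.getElem_append_right]
      rw [ht, hg]
      exact hx

lemma exists_maximal_run [Fintype M] [DecidableEq M] (R : Set (Set M × Set M)) :
    ∃ l : List M, ObaRun R l ∧ ∀ x, ¬ ObaEligible R l.toFinset x := by
  suffices h : ∀ n (l : List M), ObaRun R l → Fintype.card M ≤ l.length + n →
      ∃ l', ObaRun R l' ∧ ∀ x, ¬ ObaEligible R l'.toFinset x by
    exact h (Fintype.card M) [] ⟨List.nodup_nil, by simp⟩ (by simp)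
  intro n
  induction n with
  | zero =>
    intro l hl hlen
    refine ⟨l, hl, fun x hx => hx.1 ?_⟩
    have hcard : l.toFinset.card = l.length := List.toFinset_card_of_nodup hl.1
    have : l.toFinset = Finset.univ := by
      apply Finset.eq_univ_of_card
      have := Finset.card_le_univ l.toFinset
      omega
    simp [this]
  | succ n ih =>
    intro l hl hlen
    by_cases hex : ∃ x, ObaEligible R l.toFinset x
    · obtain ⟨x, hx⟩ := hex
      refine ih (l ++ [x]) (obaRun_append hl hx) ?_
      simp only [List.length_append, List.length_singleton]
      omega
    · exact ⟨l, hl, fun x hx => hex ⟨x, hx⟩⟩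

/-- Correctness of the greedy OBA algorithm: a linear ordering of `M` fulfilling the
one-before-all property for `(Q, R)` exists iff every maximal greedy run picks all
elements of `M`. -/
theorem greedy_oba_correct [Fintype M] [DecidableEq M]
    (Q : Set (Set M)) (R : Set (Set M × Set M))
    (hR : ∀ p ∈ R, p.1 ∈ Q ∧ p.2 ∈ Q) :
    (∃ σ : Fin (Fintype.card M) ≃ M,
        ∀ p ∈ R, p.2 ≠ ∅ → ∃ a ∈ p.1, ∀ b ∈ p.2, σ.symm a < σ.symm b) ↔
      (∀ l : List M, ObaRun R l →
        (∀ x : M, ¬ ObaEligible R l.toFinset x) → ∀ x : M, x ∈ l) := by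
  classical
  constructor
  · rintro ⟨σ, hσ⟩ l hl hmax x
    by_contra hx
    -- set of indices of unpicked elements
    set S : Finset (Fin (Fintype.card M)) := Finset.univ.filter (fun i => σ i ∉ l) with hS
    have hSne : S.Nonempty := ⟨σ.symm x, by simp [hS, hx]⟩
    set i₀ := S.min' hSne with hi₀
    have hx₀ : σ i₀ ∉ l := by
      have := S.min'_mem hSne
      simpa [hS] using this
    apply hmax (σ i₀)
    refine ⟨fun h => hx₀ (List.mem_toFinset.mp h), ?_⟩
    intro p hp hmem
    obtain ⟨a, ha, hab⟩ := hσ p hp (Set.Nonempty.ne_empty ⟨σ i₀, hmem⟩)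
    refine ⟨a, ha, List.mem_toFinset.mpr ?_⟩
    by_contra hal
    have haS : σ.symm a ∈ S := by simp [hS, hal]
    have h1 : i₀ ≤ σ.symm a := S.min'_le _ haS
    have h2 : σ.symm a < σ.symm (σ i₀) := hab (σ i₀) hmem
    rw [Equiv.symm_apply_apply] at h2
    exact absurd (lt_of_le_of_lt h1 h2) (lt_irrefl _)
  · intro hgreedy
    obtain ⟨l, hl, hmax⟩ := exists_maximal_run R
    have hall : ∀ x, x ∈ l := hgreedy l hl hmax
    have hlen : l.length = Fintype.card M := by
      rw [← List.toFinset_card_of_nodup hl.1]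
      have : l.toFinset = Finset.univ := Finset.eq_univ_iff_forall.mpr
        (fun x => List.mem_toFinset.mpr (hall x))
      rw [this, Finset.card_univ]
    set e : Fin l.length ≃ M := hl.1.getEquivOfForallMemList l hall with he
    refine ⟨(finCongr hlen.symm).trans e, fun p hp hne => ?_⟩
    obtain ⟨b, hb⟩ := Set.nonempty_iff_ne_empty.mpr hne
    set σ : Fin (Fintype.card M) ≃ M := (finCongr hlen.symm).trans e with hσdef
    have hσget : ∀ i : Fin (Fintype.card M), σ i = l.get ⟨i.1, by rw [hlen]; exact i.2⟩ := by
      intro i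
      simp [hσdef, he, List.Nodup.getEquivOfForallMemList, finCongr]
    set T : Finset (Fin (Fintype.card M)) := Finset.univ.filter (fun i => σ i ∈ p.2) with hT
    have hTne : T.Nonempty := ⟨σ.symm b, by simp [hT, hb]⟩
    set i₀ := T.min' hTne with hi₀
    have hi₀mem : σ i₀ ∈ p.2 := by
      have := T.min'_mem hTne
      simpa [hT] using this
    have hi₀len : (i₀ : ℕ) < l.length := by rw [hlen]; exact i₀.2
    have helig := (hl.2 i₀.1 hi₀len).2 p hp (by rw [← hσget i₀] at *; exact hi₀mem)
    obtain ⟨a, ha, haP⟩ := helig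
    refine ⟨a, ha, fun c hc => ?_⟩
    -- index of a is < i₀
    have hamem : a ∈ l.take i₀.1 := List.mem_toFinset.mp haP
    obtain ⟨⟨j, hj⟩, hja⟩ := List.mem_iff_get.mp hamem
    have hjlen : j < l.length := lt_of_lt_of_le hj (by simp)
    have hji₀ : j < i₀.1 := by
      have := hj
      simp [List.length_take] at this
      omega
    have hgj : l.get ⟨j, hjlen⟩ = a := by
      rw [← hja]
      simp [List.getElem_take]
    have hσj : σ ⟨j, by omega⟩ = a := by rw [hσget]; exact hgj
    have hsymma : σ.symm a = ⟨j, by omega⟩ := by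
      rw [← hσj, Equiv.symm_apply_apply]
    have hcT : σ.symm c ∈ T := by simp [hT, hc]
    have h1 : i₀ ≤ σ.symm c := T.min'_le _ hcT
    rw [hsymma]
    calc (⟨j, by omega⟩ : Fin (Fintype.card M)) < i₀ := by
          exact Fin.mk_lt_of_lt_val hji₀
      _ ≤ σ.symm c := h1
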